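/- Let \(\mathcal{F}\) be an \(\ell\)-shifted k-uniform intersecting family on [n] with \(n \ge 4k+\ell\), let \(m = \lfloor (\ell-1)/2 \rfloor\), and define \(\mathcal{G} = \{S \subseteq [\ell] : |S| \le m \text{ and } d_S(\mathcal{F}) \ge 2^{k-m}\binom{n-k-\ell+m}{k-\ell+m}\}\). Then \(\mathcal{G}\) is an intersecting family: any two members of \(\mathcal{G}\) have nonempty intersection. -/

import Mathlib

open Finset

/-- The (i,j)-shift of a single set with respect to a family. -/
def shiftSet (F : Finset (Finset ℕ)) (i j : ℕ) (A : Finset ℕ) : Finset ℕ :=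
  if i ∈ A ∧ j ∉ A ∧ (insert j A).erase i ∉ F then (insert j A).erase i else A

/-- The (i,j)-shift of a family. -/
def shiftFam (F : Finset (Finset ℕ)) (i j : ℕ) : Finset (Finset ℕ) :=
  F.image (shiftSet F i j)

/-- A family is intersecting if any two members meet. -/
def IntersectingFam (F : Finset (Finset ℕ)) : Prop :=
  ∀ A ∈ F, ∀ B ∈ F, (A ∩ B).Nonempty

/-- A family is t-intersecting if any two members share at least t elements. -/
def TIntersecting (t : ℕ) (F : Finset (Finset ℕ)) : Prop :=
  ∀ A ∈ F, ∀ B ∈ F, t ≤ (A ∩ B).card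

/-- A family on [n] is ℓ-shifted if it is invariant under all (i,j)-shifts with
    i ∈ [n] \ [ℓ] and j ∈ [ℓ]. -/
def IsShifted (ℓ n : ℕ) (F : Finset (Finset ℕ)) : Prop :=
  ∀ i ∈ Icc 1 n, ∀ j ∈ Icc 1 ℓ, i ∉ Icc 1 ℓ → shiftFam F i j = F

/-- The degree of an element in a family. -/
def deg (F : Finset (Finset ℕ)) (i : ℕ) : ℕ := (F.filter (fun A => i ∈ A)).card

/-- The degree of a subset S of [ℓ]: the number of members of F whose trace on [ℓ] is S. -/
def dS (F : Finset (Finset ℕ)) (ℓ : ℕ) (S : Finset ℕ) : ℕ :=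
  (F.filter (fun A => A ∩ Icc 1 ℓ = S)).card

lemma choose_step2 (P i : ℕ) (h : 3 * i + 3 ≤ P) : 2 * P.choose i ≤ P.choose (i + 1) := by
  have key := Nat.choose_succ_right_eq P i
  have h1 : 2 * P.choose i * (i + 1) ≤ P.choose (i + 1) * (i + 1) := by
    rw [key]
    calc 2 * P.choose i * (i + 1) = P.choose i * (2 * (i + 1)) := by ring
      _ ≤ P.choose i * (P - i) := Nat.mul_le_mul_left _ (by omega)
  exact Nat.le_of_mul_le_mul_right h1 (by omega)

lemma choose_step1 (P i : ℕ) (h : 2 * i + 1 ≤ P) : P.choose i ≤ P.choose (i + 1) := by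
  have key := Nat.choose_succ_right_eq P i
  have h1 : P.choose i * (i + 1) ≤ P.choose (i + 1) * (i + 1) := by
    rw [key]
    exact Nat.mul_le_mul_left _ (by omega)
  exact Nat.le_of_mul_le_mul_right h1 (by omega)

lemma choose_mono_right (P : ℕ) : ∀ b, ∀ a, a ≤ b → 2 * b ≤ P → P.choose a ≤ P.choose b := by
  intro b
  induction b with
  | zero =>
    intro a ha _
    simp [Nat.le_zero.mp ha]
  | succ b ih =>
    intro a ha hP
    rcases Nat.lt_or_ge a (b + 1) with h | h
    · exact le_trans (ih a (by omega) (by omega)) (choose_step1 P b (by omega))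
    · have : a = b + 1 := by omega
      rw [this]

lemma choose_pow2 (P r : ℕ) : ∀ j, 3 * (r + j) ≤ P → 2 ^ j * P.choose r ≤ P.choose (r + j) := by
  intro j
  induction j with
  | zero => simp
  | succ j ih =>
    intro h
    calc 2 ^ (j + 1) * P.choose r = 2 * (2 ^ j * P.choose r) := by ring
      _ ≤ 2 * P.choose (r + j) := Nat.mul_le_mul_left _ (ih (by omega))
      _ ≤ P.choose (r + j + 1) := choose_step2 P (r + j) (by omega)
      _ = P.choose (r + (j + 1)) := by ring_nf

lemma shift_mem {F : Finset (Finset ℕ)} {ℓ n : ℕ} (hsh : IsShifted ℓ n F)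
    {A : Finset ℕ} (hA : A ∈ F) (hAn : A ⊆ Icc 1 n) {i j : ℕ}
    (hiA : i ∈ A) (hiℓ : i ∉ Icc 1 ℓ) (hj : j ∈ Icc 1 ℓ) (hjA : j ∉ A) :
    (insert j A).erase i ∈ F := by
  have h1 : shiftSet F i j A ∈ shiftFam F i j := Finset.mem_image_of_mem _ hA
  rw [hsh i (hAn hiA) j hj hiℓ] at h1
  unfold shiftSet at h1
  split_ifs at h1 with hc
  · exact h1
  · push_neg at hc
    exact hc hiA hjA

lemma disjointify {F : Finset (Finset ℕ)} {ℓ n : ℕ} (hsh : IsShifted ℓ n F)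
    (hFn : ∀ A ∈ F, A ⊆ Icc 1 n) (hℓn : ℓ ≤ n) (B : Finset ℕ) :
    ∀ t (A : Finset ℕ), A ∈ F → (A ∩ B).card ≤ t →
      (∀ x ∈ A ∩ B, x ∉ Icc 1 ℓ) → ((A ∪ B) ∩ Icc 1 ℓ).card + (A ∩ B).card ≤ ℓ →
      ∃ A' ∈ F, A' ∩ B = ∅ := by
  intro t
  induction t with
  | zero =>
    intro A hA hcard _ _
    exact ⟨A, hA, card_eq_zero.mp (Nat.le_zero.mp hcard)⟩
  | succ t ih =>
    intro A hA hcard hdisj hinv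
    rcases eq_or_ne (A ∩ B) ∅ with he | he
    · exact ⟨A, hA, he⟩
    obtain ⟨i, hi⟩ := nonempty_iff_ne_empty.mpr he
    have hiA : i ∈ A := (mem_inter.mp hi).1
    have hiB : i ∈ B := (mem_inter.mp hi).2
    have hiℓ : i ∉ Icc 1 ℓ := hdisj i hi
    have hABpos : 1 ≤ (A ∩ B).card := card_pos.mpr ⟨i, hi⟩
    -- find a free slot j in Icc 1 ℓ
    have hc := card_sdiff_add_card_inter (Icc 1 ℓ) (A ∪ B)
    rw [Nat.card_Icc] at hc
    have hcomm : (Icc 1 ℓ ∩ (A ∪ B)).card = ((A ∪ B) ∩ Icc 1 ℓ).card := by rw [inter_comm]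
    have hpos : 0 < (Icc 1 ℓ \ (A ∪ B)).card := by omega
    obtain ⟨j, hj⟩ := card_pos.mp hpos
    have hjℓ : j ∈ Icc 1 ℓ := (mem_sdiff.mp hj).1
    have hjAB : j ∉ A ∪ B := (mem_sdiff.mp hj).2
    have hjA : j ∉ A := fun h => hjAB (mem_union_left _ h)
    have hjB : j ∉ B := fun h => hjAB (mem_union_right _ h)
    have hij : j ≠ i := fun h => hiℓ (h ▸ hjℓ)
    set A' := (insert j A).erase i with hA'
    have hA'F : A' ∈ F := shift_mem hsh hA (hFn A hA) hiA hiℓ hjℓ hjA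
    have hA'B : A' ∩ B = (A ∩ B).erase i := by
      ext x
      simp only [hA', mem_inter, mem_erase, mem_insert]
      constructor
      · rintro ⟨⟨hxi, hx | hx⟩, hxB⟩
        · exact absurd (hx ▸ hxB) hjB
        · exact ⟨hxi, hx, hxB⟩
      · rintro ⟨hxi, hxA, hxB⟩
        exact ⟨⟨hxi, Or.inr hxA⟩, hxB⟩
    have hU : A' ∪ B = insert j (A ∪ B) := by
      ext x
      simp only [hA', mem_union, mem_erase, mem_insert]
      constructor
      · rintro (⟨hxi, hx | hx⟩ | hx)
        · exact Or.inl hx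
        · exact Or.inr (Or.inl hx)
        · exact Or.inr (Or.inr hx)
      · rintro (hx | hx | hx)
        · exact Or.inl ⟨hx ▸ hij, Or.inl hx⟩
        · by_cases hxi : x = i
          · exact Or.inr (hxi ▸ hiB)
          · exact Or.inl ⟨hxi, Or.inr hx⟩
        · exact Or.inr hx
    have hUcard : ((A' ∪ B) ∩ Icc 1 ℓ).card = ((A ∪ B) ∩ Icc 1 ℓ).card + 1 := by
      rw [hU, insert_inter_of_mem hjℓ, card_insert_of_notMem]
      intro h
      exact hjAB (mem_inter.mp h).1
    have hIcard : (A' ∩ B).card = (A ∩ B).card - 1 := by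
      rw [hA'B, card_erase_of_mem hi]
    apply ih A' hA'F (by omega)
    · intro x hx
      rw [hA'B] at hx
      exact hdisj x (erase_subset _ _ hx)
    · omega

theorem stmt12 (n k ℓ : ℕ) (hn : 4 * k + ℓ ≤ n)
    (F : Finset (Finset ℕ))
    (hF : ∀ A ∈ F, A ⊆ Icc 1 n) (hunif : ∀ A ∈ F, A.card = k)
    (hsh : IsShifted ℓ n F) (hint : IntersectingFam F)
    (m : ℕ) (hm : m = (ℓ - 1) / 2)
    (G : Finset (Finset ℕ))
    (hG : G = (Icc 1 ℓ).powerset.filter (fun S => S.card ≤ m ∧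
      2 ^ (k - m) * Nat.choose (n + m - k - ℓ) (k + m - ℓ) ≤ dS F ℓ S)) :
    ∀ S₁ ∈ G, ∀ S₂ ∈ G, (S₁ ∩ S₂).Nonempty := by
  subst hG
  intro S₁ hS₁ S₂ hS₂
  by_contra hcon
  rw [not_nonempty_iff_eq_empty] at hcon
  simp only [mem_filter, mem_powerset] at hS₁ hS₂
  obtain ⟨hS₁ℓ, hs₁m, hd₁⟩ := hS₁
  obtain ⟨hS₂ℓ, hs₂m, hd₂⟩ := hS₂
  set s₁ := S₁.card with hs₁
  set s₂ := S₂.card with hs₂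
  -- the threshold is positive
  have hT1 : 1 ≤ 2 ^ (k - m) * Nat.choose (n + m - k - ℓ) (k + m - ℓ) := by
    have h1 : 0 < Nat.choose (n + m - k - ℓ) (k + m - ℓ) := Nat.choose_pos (by omega)
    have h2 : 0 < 2 ^ (k - m) := Nat.pow_pos (by omega)
    exact Nat.one_le_iff_ne_zero.mpr (Nat.mul_ne_zero (by omega) (by omega))
  -- pick B₀ with trace S₂
  have hB0ex : (F.filter (fun A => A ∩ Icc 1 ℓ = S₂)).Nonempty :=
    card_pos.mp (lt_of_lt_of_le hT1 hd₂)
  obtain ⟨B₀, hB₀mem⟩ := hB0ex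
  rw [mem_filter] at hB₀mem
  obtain ⟨hB₀F, hB₀tr⟩ := hB₀mem
  -- pick some A₀ with trace S₁ (to know s₁ ≤ k)
  have hA0ex : (F.filter (fun A => A ∩ Icc 1 ℓ = S₁)).Nonempty :=
    card_pos.mp (lt_of_lt_of_le hT1 hd₁)
  obtain ⟨A₀, hA₀mem⟩ := hA0ex
  rw [mem_filter] at hA₀mem
  have hs₁k : s₁ ≤ k := by
    rw [hs₁, ← hA₀mem.2, ← hunif A₀ hA₀mem.1]
    exact card_le_card inter_subset_left
  have hs₂k : s₂ ≤ k := by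
    rw [hs₂, ← hB₀tr, ← hunif B₀ hB₀F]
    exact card_le_card inter_subset_left
  have hs₂ℓ : s₂ ≤ ℓ := by
    have := card_le_card hS₂ℓ
    rwa [Nat.card_Icc, Nat.add_sub_cancel] at this
  set D := B₀ \ Icc 1 ℓ with hD
  have hDcard : D.card = k - s₂ := by
    have h := card_sdiff_add_card_inter B₀ (Icc 1 ℓ)
    rw [hB₀tr, hunif B₀ hB₀F] at h
    rw [hD]
    omega
  -- for sets of trace S₁, intersection with B₀ lives in D
  have hAB : ∀ A : Finset ℕ, A ∩ Icc 1 ℓ = S₁ → A ∩ B₀ = A ∩ D := by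
    intro A hA
    ext x
    simp only [mem_inter, hD, mem_sdiff]
    constructor
    · rintro ⟨hxA, hxB⟩
      refine ⟨hxA, hxB, fun hxl => ?_⟩
      have hx1 : x ∈ S₁ := hA ▸ mem_inter.mpr ⟨hxA, hxl⟩
      have hx2 : x ∈ S₂ := hB₀tr ▸ mem_inter.mpr ⟨hxB, hxl⟩
      have hx12 : x ∈ S₁ ∩ S₂ := mem_inter.mpr ⟨hx1, hx2⟩
      rw [hcon] at hx12
      exact notMem_empty x hx12
    · rintro ⟨hxA, hxB, _⟩
      exact ⟨hxA, hxB⟩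
  -- Claim A: there is A of trace S₁ with small intersection with B₀
  have claimA : ∃ A ∈ F, A ∩ Icc 1 ℓ = S₁ ∧ s₁ + s₂ + (A ∩ B₀).card ≤ ℓ := by
    by_cases hcase : k + s₂ ≤ ℓ ∨ k + s₁ ≤ ℓ
    · refine ⟨A₀, hA₀mem.1, hA₀mem.2, ?_⟩
      rw [hAB A₀ hA₀mem.2]
      have h1 : (A₀ ∩ D).card ≤ k - s₁ := by
        have hsub : A₀ ∩ D ⊆ A₀ \ Icc 1 ℓ := by
          intro x hx
          have hxD := (mem_inter.mp hx).2
          rw [hD] at hxD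
          exact mem_sdiff.mpr ⟨(mem_inter.mp hx).1, (mem_sdiff.mp hxD).2⟩
        have h := card_sdiff_add_card_inter A₀ (Icc 1 ℓ)
        rw [hA₀mem.2, hunif A₀ hA₀mem.1] at h
        have := card_le_card hsub
        omega
      have h2 : (A₀ ∩ D).card ≤ k - s₂ := hDcard ▸ card_le_card inter_subset_right
      omega
    · push_neg at hcase
      exfalso
      have hno : ∀ A ∈ F, A ∩ Icc 1 ℓ = S₁ → ℓ < s₁ + s₂ + (A ∩ D).card := by
        intro A hAF hAtr
        by_contra hle
        push_neg at hle
        -- then A itself witnesses a disjoint pair after shifting: contradiction later;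
        -- here we directly disjointify and contradict intersecting
        have hUeq : (A ∪ B₀) ∩ Icc 1 ℓ = S₁ ∪ S₂ := by
          rw [union_inter_distrib_right, hAtr, hB₀tr]
        have hU : ((A ∪ B₀) ∩ Icc 1 ℓ).card = s₁ + s₂ := by
          rw [hUeq, card_union_of_disjoint (disjoint_iff_inter_eq_empty.mpr hcon)]
        have hdisj0 : ∀ x ∈ A ∩ B₀, x ∉ Icc 1 ℓ := by
          intro x hx hxl
          rw [hAB A hAtr] at hx
          have hxD := (mem_inter.mp hx).2
          rw [hD] at hxD
          exact (mem_sdiff.mp hxD).2 hxl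
        have hABc : (A ∩ B₀).card = (A ∩ D).card := by rw [hAB A hAtr]
        obtain ⟨A', hA'F, hA'B⟩ :=
          disjointify hsh hF (by omega) B₀ (A ∩ B₀).card A hAF le_rfl hdisj0 (by omega)
        obtain ⟨x, hx⟩ := hint A' hA'F B₀ hB₀F
        rw [hA'B] at hx
        exact notMem_empty x hx
      -- counting
      set W := Icc 1 n \ (Icc 1 ℓ ∪ D) with hWdef
      have hsubn : Icc 1 ℓ ∪ D ⊆ Icc 1 n := by
        apply union_subset
        · exact Icc_subset_Icc_right (by omega)
        · rw [hD]
          exact sdiff_subset.trans (hF B₀ hB₀F)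
      have hdisjID : Disjoint (Icc 1 ℓ) D := by
        rw [hD]; exact disjoint_sdiff
      have hXcard : (Icc 1 ℓ ∪ D).card = ℓ + (k - s₂) := by
        rw [card_union_of_disjoint hdisjID, Nat.card_Icc, hDcard]
        omega
      have hWcard : W.card = n - ℓ - (k - s₂) := by
        rw [hWdef, card_sdiff_of_subset hsubn, Nat.card_Icc, hXcard]
        omega
      set r := k + s₂ - ℓ - 1 with hr
      set P := W.card with hP
      have hP3k : 3 * k ≤ P := by omega
      have hfib := card_eq_sum_card_fiberwise (f := fun A => A ∩ D)
        (s := F.filter (fun A => A ∩ Icc 1 ℓ = S₁)) (t := D.powerset)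
        (fun A _ => mem_powerset.mpr inter_subset_right)
      have hfibbound : ∀ E ∈ D.powerset,
          ((F.filter (fun A => A ∩ Icc 1 ℓ = S₁)).filter (fun A => A ∩ D = E)).card ≤
            Nat.choose P r := by
        intro E hE
        rcases ((F.filter (fun A => A ∩ Icc 1 ℓ = S₁)).filter
            (fun A => A ∩ D = E)).eq_empty_or_nonempty with h0 | h0
        · simp [h0]
        obtain ⟨A₁, hA₁⟩ := h0
        simp only [mem_filter] at hA₁
        obtain ⟨⟨hA₁F, hA₁tr⟩, hA₁D⟩ := hA₁
        have hElarge : ℓ < s₁ + s₂ + E.card := by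
          have h := hno A₁ hA₁F hA₁tr
          rwa [hA₁D] at h
        have hSEdisj : Disjoint S₁ E := hdisjID.mono hS₁ℓ (mem_powerset.mp hE)
        have hinj : ((F.filter (fun A => A ∩ Icc 1 ℓ = S₁)).filter
            (fun A => A ∩ D = E)).card ≤ (W.powersetCard (k - s₁ - E.card)).card := by
          apply card_le_card_of_injOn (fun A => A \ (Icc 1 ℓ ∪ D))
          · intro A hA
            simp only [coe_filter, mem_coe, mem_filter, Set.mem_setOf_eq] at hA ⊢
            obtain ⟨⟨hAF', hAtr'⟩, hAD'⟩ := hA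
            rw [mem_powersetCard]
            constructor
            · exact sdiff_subset_sdiff (hF A hAF') (Finset.Subset.refl _)
            · have h := card_sdiff_add_card_inter A (Icc 1 ℓ ∪ D)
              have hAX : A ∩ (Icc 1 ℓ ∪ D) = S₁ ∪ E := by
                rw [inter_union_distrib_left, hAtr', hAD']
              have hSE : (S₁ ∪ E).card = s₁ + E.card := card_union_of_disjoint hSEdisj
              rw [hAX, hSE, hunif A hAF'] at h
              omega
          · intro A hA A' hA' heq
            simp only [coe_filter, Set.mem_setOf_eq, mem_filter] at hA hA'
            have hrec : ∀ B : Finset ℕ, B ∩ Icc 1 ℓ = S₁ → B ∩ D = E →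
                B = (S₁ ∪ E) ∪ (B \ (Icc 1 ℓ ∪ D)) := by
              intro B hBtr hBD
              ext x
              simp only [mem_union, mem_sdiff]
              constructor
              · intro hxB
                by_cases hx : x ∈ Icc 1 ℓ ∪ D
                · rcases mem_union.mp hx with h | h
                  · exact Or.inl (Or.inl (hBtr ▸ mem_inter.mpr ⟨hxB, h⟩))
                  · exact Or.inl (Or.inr (hBD ▸ mem_inter.mpr ⟨hxB, h⟩))
                · exact Or.inr ⟨hxB, fun h => hx (mem_union.mpr h)⟩
              · rintro ((hx | hx) | ⟨hx, _⟩)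
                · rw [← hBtr] at hx
                  exact (mem_inter.mp hx).1
                · rw [← hBD] at hx
                  exact (mem_inter.mp hx).1
                · exact hx
            calc A = (S₁ ∪ E) ∪ (A \ (Icc 1 ℓ ∪ D)) := hrec A hA.1.2 hA.2
              _ = (S₁ ∪ E) ∪ (A' \ (Icc 1 ℓ ∪ D)) := by
                  have heq' : A \ (Icc 1 ℓ ∪ D) = A' \ (Icc 1 ℓ ∪ D) := heq
                  rw [heq']
              _ = A' := (hrec A' hA'.1.2 hA'.2).symm
        rw [card_powersetCard, ← hP] at hinj
        refine le_trans hinj (choose_mono_right P r (k - s₁ - E.card) (by omega) (by omega))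
      have hsum : dS F ℓ S₁ ≤ 2 ^ (k - s₂) * Nat.choose P r := by
        have h1 : dS F ℓ S₁ = ∑ E ∈ D.powerset,
            ((F.filter (fun A => A ∩ Icc 1 ℓ = S₁)).filter (fun A => A ∩ D = E)).card := hfib
        rw [h1]
        calc ∑ E ∈ D.powerset,
              ((F.filter (fun A => A ∩ Icc 1 ℓ = S₁)).filter (fun A => A ∩ D = E)).card
            ≤ D.powerset.card • Nat.choose P r := sum_le_card_nsmul _ _ _ hfibbound
          _ = 2 ^ (k - s₂) * Nat.choose P r := by
              rw [card_powerset, hDcard, smul_eq_mul]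
      have hfinal : 2 ^ (k - s₂) * Nat.choose P r <
          2 ^ (k - m) * Nat.choose (n + m - k - ℓ) (k + m - ℓ) := by
        set u := m - s₂ with hu
        have htop : n + m - k - ℓ = P + u := by omega
        have hlow : k + m - ℓ = r + (u + 1) := by omega
        have h1 : 2 ^ (u + 1) * Nat.choose P r ≤ Nat.choose P (r + (u + 1)) :=
          choose_pow2 P r (u + 1) (by omega)
        have h2 : Nat.choose P (r + (u + 1)) ≤ Nat.choose (P + u) (r + (u + 1)) :=
          Nat.choose_le_choose _ (by omega)
        have hCpos : 1 ≤ Nat.choose P r := Nat.choose_pos (by omega)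
        have hpow : 2 ^ (k - s₂) * 2 ≤ 2 ^ (k - m) * 2 ^ (u + 1) := by
          rw [← pow_succ, ← pow_add]
          exact Nat.pow_le_pow_right (by omega) (by omega)
        calc 2 ^ (k - s₂) * Nat.choose P r
            < 2 ^ (k - s₂) * Nat.choose P r * 2 := by
              have hposx : 0 < 2 ^ (k - s₂) * Nat.choose P r :=
                Nat.mul_pos (Nat.pow_pos (by omega)) (by omega)
              omega
          _ = 2 ^ (k - s₂) * 2 * Nat.choose P r := by ring
          _ ≤ 2 ^ (k - m) * 2 ^ (u + 1) * Nat.choose P r := Nat.mul_le_mul_right _ hpow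
          _ = 2 ^ (k - m) * (2 ^ (u + 1) * Nat.choose P r) := by ring
          _ ≤ 2 ^ (k - m) * Nat.choose (P + u) (r + (u + 1)) :=
              Nat.mul_le_mul_left _ (le_trans h1 h2)
          _ = 2 ^ (k - m) * Nat.choose (n + m - k - ℓ) (k + m - ℓ) := by rw [htop, hlow]
      omega
  obtain ⟨A, hAF, hAtr, hAinv⟩ := claimA
  have hUeq : (A ∪ B₀) ∩ Icc 1 ℓ = S₁ ∪ S₂ := by
    rw [union_inter_distrib_right, hAtr, hB₀tr]
  have hU : ((A ∪ B₀) ∩ Icc 1 ℓ).card = s₁ + s₂ := by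
    rw [hUeq, card_union_of_disjoint (disjoint_iff_inter_eq_empty.mpr hcon)]
  have hdisj0 : ∀ x ∈ A ∩ B₀, x ∉ Icc 1 ℓ := by
    intro x hx hxl
    rw [hAB A hAtr] at hx
    have hxD := (mem_inter.mp hx).2
    rw [hD] at hxD
    exact (mem_sdiff.mp hxD).2 hxl
  obtain ⟨A', hA'F, hA'B⟩ :=
    disjointify hsh hF (by omega) B₀ (A ∩ B₀).card A hAF le_rfl hdisj0 (by omega)
  obtain ⟨x, hx⟩ := hint A' hA'F B₀ hB₀F
  rw [hA'B] at hx
  exact notMem_empty x hx
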